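/- With a_n = (2 log n)^{-1/2} and b_n = (2 log n)^{1/2} - (log log n + log 4π)/(2(2 log n)^{1/2}), for each fixed x ∈ ℝ one has n(1 - Φ(a_n x + b_n)) → e^{-x} as n → ∞. -/

import Mathlib

open Real MeasureTheory Filter Set

/-- The standard normal density. -/
noncomputable def stdNormalPDF (t : ℝ) : ℝ := Real.exp (-t ^ 2 / 2) / Real.sqrt (2 * Real.pi)

/-- The standard normal cumulative distribution function. -/
noncomputable def stdNormalCDF (x : ℝ) : ℝ := ∫ t in Set.Iic x, stdNormalPDF t

lemma pdf_eq (t : ℝ) : stdNormalPDF t = Real.exp (-(1/2) * t ^ 2) / Real.sqrt (2 * Real.pi) := by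
  unfold stdNormalPDF; ring_nf

lemma pdf_pos (t : ℝ) : 0 < stdNormalPDF t := by
  unfold stdNormalPDF
  positivity

lemma integrable_pdf : Integrable stdNormalPDF := by
  simp only [funext pdf_eq, div_eq_mul_inv]
  exact (integrable_exp_neg_mul_sq (by norm_num : (0:ℝ) < 1/2)).mul_const _

lemma integral_pdf : ∫ t, stdNormalPDF t = 1 := by
  simp only [funext pdf_eq, div_eq_mul_inv]
  rw [MeasureTheory.integral_mul_const, integral_gaussian]
  have h1 : Real.sqrt Real.pi ≠ 0 := by positivity
  have h2 : Real.sqrt 2 ≠ 0 := by positivity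
  norm_num
  field_simp

lemma tail_eq (u : ℝ) : 1 - stdNormalCDF u = ∫ t in Set.Ioi u, stdNormalPDF t := by
  have := intervalIntegral.integral_Iic_add_Ioi (b := u) (μ := volume) (f := stdNormalPDF)
    integrable_pdf.integrableOn integrable_pdf.integrableOn
  rw [integral_pdf] at this
  unfold stdNormalCDF
  linarith

lemma continuous_pdf : Continuous stdNormalPDF := by
  unfold stdNormalPDF
  fun_prop

lemma tendsto_pdf : Tendsto stdNormalPDF atTop (nhds 0) := by
  have h1 : Tendsto (fun t : ℝ => t ^ 2 / 2) atTop atTop :=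
    (tendsto_pow_atTop two_ne_zero).atTop_div_const (by norm_num)
  have h2 : Tendsto (fun t : ℝ => -t ^ 2 / 2) atTop atBot := by
    simp only [neg_div]
    exact tendsto_neg_atBot_iff.mpr h1
  have h3 := (Real.tendsto_exp_atBot.comp h2).div_const (Real.sqrt (2 * Real.pi))
  rw [zero_div] at h3
  exact h3.congr fun t => rfl

lemma hasDerivAt_exp_part (t : ℝ) :
    HasDerivAt (fun t : ℝ => Real.exp (-t ^ 2 / 2) / Real.sqrt (2 * Real.pi))
      (-t * stdNormalPDF t) t := by
  have h1 : HasDerivAt (fun t : ℝ => -t ^ 2 / 2) (-t) t := by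
    have := ((hasDerivAt_pow 2 t).neg).div_const 2
    simpa using this.congr_deriv (by ring)
  have h2 := (h1.exp).div_const (Real.sqrt (2 * Real.pi))
  exact h2.congr_deriv (by unfold stdNormalPDF; ring)

lemma integrable_mul_pdf : Integrable (fun t : ℝ => t * stdNormalPDF t) := by
  have h := (integrable_mul_exp_neg_mul_sq (show (0:ℝ) < 1/2 by norm_num)).div_const
    (Real.sqrt (2 * Real.pi))
  refine h.congr (Filter.Eventually.of_forall fun t => ?_)
  show t * Real.exp (-(1/2) * t ^ 2) / Real.sqrt (2 * Real.pi) = t * stdNormalPDF t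
  unfold stdNormalPDF
  rw [show -(1/2) * t ^ 2 = -t ^ 2 / 2 by ring]
  ring

lemma integral_mul_pdf (u : ℝ) : ∫ t in Set.Ioi u, t * stdNormalPDF t = stdNormalPDF u := by
  have h : ∫ t in Set.Ioi u, t * stdNormalPDF t = 0 - (-stdNormalPDF u) := by
    apply integral_Ioi_of_hasDerivAt_of_tendsto'
      (f := fun t => -(Real.exp (-t ^ 2 / 2) / Real.sqrt (2 * Real.pi)))
    · intro t _
      exact ((hasDerivAt_exp_part t).neg).congr_deriv (by ring)
    · exact integrable_mul_pdf.integrableOn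
    · have h5 := tendsto_pdf.neg
      rw [neg_zero] at h5
      exact h5
  simpa [stdNormalPDF] using h

lemma tail_le (u : ℝ) (hu : 0 < u) :
    ∫ t in Set.Ioi u, stdNormalPDF t ≤ stdNormalPDF u / u := by
  have key : ∫ t in Set.Ioi u, stdNormalPDF t ≤ ∫ t in Set.Ioi u, t / u * stdNormalPDF t := by
    apply setIntegral_mono_on integrable_pdf.integrableOn
    · refine ((integrable_mul_pdf.div_const u).congr
        (Filter.Eventually.of_forall fun t => by ring)).integrableOn
    · exact measurableSet_Ioi
    · intro t ht
      have h1 : (1:ℝ) ≤ t / u := (one_le_div hu).2 (le_of_lt ht)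
      nlinarith [pdf_pos t]
  calc ∫ t in Set.Ioi u, stdNormalPDF t ≤ ∫ t in Set.Ioi u, t / u * stdNormalPDF t := key
    _ = (∫ t in Set.Ioi u, t * stdNormalPDF t) / u := by
        rw [← integral_div]; congr 1; ext t; ring
    _ = stdNormalPDF u / u := by rw [integral_mul_pdf]

lemma le_tail (u : ℝ) (hu : 0 < u) :
    stdNormalPDF u / u * (1 - (u⁻¹) ^ 2) ≤ ∫ t in Set.Ioi u, stdNormalPDF t := by
  have hmeas : MeasurableSet (Set.Ioi u) := measurableSet_Ioi
  -- integrability of the auxiliary integrand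
  have hint2 : IntegrableOn (fun t : ℝ => 3 * (t⁻¹) ^ 4 * stdNormalPDF t) (Set.Ioi u) := by
    apply Integrable.mono' ((integrable_pdf.const_mul (3 * (u⁻¹) ^ 4)).integrableOn)
    · exact ((measurable_const.mul (measurable_inv.pow_const 4)).mul
        continuous_pdf.measurable).aestronglyMeasurable
    · filter_upwards [ae_restrict_mem hmeas] with t ht
      have htu : u ≤ t := le_of_lt ht
      have ht0 : 0 < t := lt_of_lt_of_le hu htu
      have h1 : t⁻¹ ≤ u⁻¹ := inv_anti₀ hu htu
      have h2 : (t⁻¹) ^ 4 ≤ (u⁻¹) ^ 4 := pow_le_pow_left₀ (inv_nonneg.2 ht0.le) h1 4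
      rw [Real.norm_eq_abs, abs_of_nonneg (mul_nonneg (by positivity) (pdf_pos t).le)]
      have := pdf_pos t
      nlinarith
  have hint1 : IntegrableOn (fun t : ℝ => (1 - 3 * (t⁻¹) ^ 4) * stdNormalPDF t) (Set.Ioi u) := by
    have h := (integrable_pdf.integrableOn (s := Set.Ioi u)).sub hint2
    refine h.congr (Filter.Eventually.of_forall fun t => ?_)
    show stdNormalPDF t - 3 * (t⁻¹) ^ 4 * stdNormalPDF t = _
    ring
  -- FTC
  have hftc : ∫ t in Set.Ioi u, (1 - 3 * (t⁻¹) ^ 4) * stdNormalPDF t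
      = 0 - (-((u⁻¹ - (u⁻¹) ^ 3) * stdNormalPDF u)) := by
    apply integral_Ioi_of_hasDerivAt_of_tendsto'
      (f := fun t => -((t⁻¹ - (t⁻¹) ^ 3) * stdNormalPDF t))
    · intro t ht
      have ht0 : t ≠ 0 := ne_of_gt (lt_of_lt_of_le hu ht)
      have hg : HasDerivAt (fun t : ℝ => t⁻¹ - (t⁻¹) ^ 3)
          (-(t ^ 2)⁻¹ - 3 * (t⁻¹) ^ 2 * -(t ^ 2)⁻¹) t :=
        (hasDerivAt_inv ht0).sub ((hasDerivAt_inv ht0).pow 3 |>.congr_deriv (by ring))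
      have he : HasDerivAt stdNormalPDF (-t * stdNormalPDF t) t := hasDerivAt_exp_part t
      have := (hg.mul he).neg
      refine this.congr_deriv ?_
      field_simp
      ring
    · exact hint1
    · have hg0 : Tendsto (fun t : ℝ => t⁻¹ - (t⁻¹) ^ 3) atTop (nhds 0) := by
        have := tendsto_inv_atTop_zero (𝕜 := ℝ)
        simpa using this.sub (this.pow 3)
      have := (hg0.mul tendsto_pdf).neg
      simpa using this
  have hmono : ∫ t in Set.Ioi u, (1 - 3 * (t⁻¹) ^ 4) * stdNormalPDF t
      ≤ ∫ t in Set.Ioi u, stdNormalPDF t := by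
    apply setIntegral_mono_on hint1 integrable_pdf.integrableOn hmeas
    intro t ht
    have ht0 : 0 < t := lt_of_lt_of_le hu (le_of_lt ht)
    have := pdf_pos t
    nlinarith [pow_pos (inv_pos.2 ht0) 4]
  rw [hftc] at hmono
  have heq : stdNormalPDF u / u * (1 - (u⁻¹) ^ 2) = (u⁻¹ - (u⁻¹) ^ 3) * stdNormalPDF u := by
    field_simp
  linarith [hmono, heq ▸ le_refl (stdNormalPDF u / u * (1 - (u⁻¹) ^ 2))]

theorem gaussian_tail_normalized_limit (a b : ℕ → ℝ)
    (ha : ∀ n : ℕ, a n = (2 * Real.log n) ^ (-(1 / 2 : ℝ)))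
    (hb : ∀ n : ℕ, b n = (2 * Real.log n) ^ ((1 : ℝ) / 2) -
        (Real.log (Real.log n) + Real.log (4 * Real.pi)) /
          (2 * (2 * Real.log n) ^ ((1 : ℝ) / 2)))
    (x : ℝ) :
    Filter.Tendsto (fun n : ℕ => (n : ℝ) * (1 - stdNormalCDF (a n * x + b n)))
      Filter.atTop (nhds (Real.exp (-x))) := by
  obtain ⟨s, hs⟩ : ∃ s : ℕ → ℝ, ∀ n, s n = Real.sqrt (2 * Real.log n) := ⟨_, fun _ => rfl⟩
  obtain ⟨d, hd⟩ : ∃ d : ℕ → ℝ, ∀ n,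
      d n = x - (Real.log (Real.log n) + Real.log (4 * Real.pi)) / 2 := ⟨_, fun _ => rfl⟩
  obtain ⟨q, hq⟩ : ∃ q : ℕ → ℝ, ∀ n, q n = d n / s n := ⟨_, fun _ => rfl⟩
  obtain ⟨u, hu⟩ : ∃ u : ℕ → ℝ, ∀ n, u n = a n * x + b n := ⟨_, fun _ => rfl⟩
  have hLtop : Tendsto (fun n : ℕ => Real.log n) atTop atTop :=
    Real.tendsto_log_atTop.comp tendsto_natCast_atTop_atTop
  have h2L : Tendsto (fun n : ℕ => 2 * Real.log n) atTop atTop :=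
    hLtop.const_mul_atTop (by norm_num)
  have hstop : Tendsto s atTop atTop := by
    have := (tendsto_rpow_atTop one_half_pos).comp h2L
    exact this.congr fun n => by rw [hs, Real.sqrt_eq_rpow]; rfl
  -- q → 0
  have hq0 : Tendsto q atTop (nhds 0) := by
    have h1 : Tendsto (fun y : ℝ => Real.log y / y ^ (1/2 : ℝ)) atTop (nhds 0) :=
      (isLittleO_log_rpow_atTop one_half_pos).tendsto_div_nhds_zero
    have h2 : Tendsto (fun n : ℕ => Real.log (Real.log n) / Real.sqrt (Real.log n))
        atTop (nhds 0) := by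
      refine (h1.comp hLtop).congr' ?_
      filter_upwards [hLtop.eventually_ge_atTop 0] with n hn
      simp only [Function.comp_apply, Real.sqrt_eq_rpow]
    have h3 : Tendsto (fun n : ℕ => (x - Real.log (4 * Real.pi) / 2) / s n) atTop (nhds 0) :=
      Tendsto.div_atTop tendsto_const_nhds hstop
    have h4 := h3.sub (h2.div_const (2 * Real.sqrt 2))
    rw [zero_div, sub_zero] at h4
    refine h4.congr' ?_
    filter_upwards [hLtop.eventually_ge_atTop 1] with n hn
    have hL0 : (0:ℝ) < Real.log n := lt_of_lt_of_le one_pos hn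
    have hsl : (0:ℝ) < Real.sqrt (Real.log n) := Real.sqrt_pos.2 hL0
    have hs2 : (0:ℝ) < Real.sqrt 2 := by positivity
    rw [hq, hd, hs, show (2:ℝ) * Real.log n = 2 * (Real.log n) from rfl,
      Real.sqrt_mul (by norm_num : (0:ℝ) ≤ 2)]
    field_simp
    ring
  -- u = s + q eventually
  have hueq : ∀ᶠ n : ℕ in atTop, u n = s n + q n := by
    filter_upwards [hLtop.eventually_ge_atTop 1] with n hn
    have hL0 : (0:ℝ) < 2 * Real.log n := by linarith
    have hs0 : (0:ℝ) < s n := by rw [hs]; exact Real.sqrt_pos.2 hL0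
    have hr1 : (2 * Real.log n) ^ ((1:ℝ)/2) = s n := by rw [hs, Real.sqrt_eq_rpow]
    have hr2 : (2 * Real.log n) ^ (-(1/2 : ℝ)) = (s n)⁻¹ := by
      rw [Real.rpow_neg hL0.le, hr1]
    rw [hu, ha, hb, hr1, hr2, hq, hd]
    field_simp
    ring
  -- pointwise identity for the key expression
  have hpoint : ∀ᶠ n : ℕ in atTop,
      Real.exp (-x) * (s n / u n * Real.exp (-(q n) ^ 2 / 2))
        = (n : ℝ) * (stdNormalPDF (u n) / u n) := by
    filter_upwards [hLtop.eventually_ge_atTop 1, hueq, eventually_ge_atTop 1] with n hn hun hn1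
    have hL0 : (0:ℝ) < Real.log n := lt_of_lt_of_le one_pos hn
    have hn0 : (0:ℝ) < (n : ℝ) := by exact_mod_cast hn1
    have hs0 : (0:ℝ) < s n := by rw [hs]; positivity
    have hss : s n ^ 2 = 2 * Real.log n := by rw [hs]; exact Real.sq_sqrt (by positivity)
    have hu2 : -(u n) ^ 2 / 2 = -Real.log n + -(d n) + -(q n) ^ 2 / 2 := by
      rw [hun, hq, show Real.log (n:ℕ) = s n ^ 2 / 2 by rw [hss]; ring]
      field_simp
      ring
    have hdexp : Real.exp (-(d n))
        = Real.exp (-x) * (Real.sqrt (Real.log n) * Real.sqrt (4 * Real.pi)) := by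
      have e1 : Real.exp (Real.log (Real.log n) / 2) = Real.sqrt (Real.log n) := by
        rw [← Real.log_sqrt hL0.le, Real.exp_log (Real.sqrt_pos.2 hL0)]
      have e2 : Real.exp (Real.log (4 * Real.pi) / 2) = Real.sqrt (4 * Real.pi) := by
        rw [← Real.log_sqrt (by positivity : (0:ℝ) ≤ 4 * Real.pi),
          Real.exp_log (Real.sqrt_pos.2 (by positivity))]
      rw [hd, show -(x - (Real.log (Real.log n) + Real.log (4 * Real.pi)) / 2)
        = -x + (Real.log (Real.log n) / 2 + Real.log (4 * Real.pi) / 2) by ring,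
        Real.exp_add, Real.exp_add, e1, e2]
    have hnexp : Real.exp (-Real.log n) = ((n : ℝ))⁻¹ := by
      rw [Real.exp_neg, Real.exp_log hn0]
    have hsplit : Real.sqrt (4 * Real.pi) = Real.sqrt 2 * Real.sqrt (2 * Real.pi) := by
      rw [← Real.sqrt_mul (by norm_num : (0:ℝ) ≤ 2), show (2:ℝ) * (2 * Real.pi) = 4 * Real.pi by ring]
    have hs_eq : s n = Real.sqrt 2 * Real.sqrt (Real.log n) := by
      rw [hs, Real.sqrt_mul (by norm_num : (0:ℝ) ≤ 2)]
    have hsqrt2pi : (0:ℝ) < Real.sqrt (2 * Real.pi) := Real.sqrt_pos.2 (by positivity)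
    have hne1 : ((n:ℝ)) ≠ 0 := hn0.ne'
    have hne2 : Real.sqrt (2 * Real.pi) ≠ 0 := hsqrt2pi.ne'
    have hne3 : Real.sqrt 2 ≠ 0 := by positivity
    have hne4 : Real.sqrt Real.pi ≠ 0 := by positivity
    have hne5 : Real.sqrt (Real.log n) ≠ 0 := by
      exact (Real.sqrt_pos.2 hL0).ne'
    have hkey : (n:ℝ) * stdNormalPDF (u n)
        = Real.exp (-x) * s n * Real.exp (-q n ^ 2 / 2) := by
      unfold stdNormalPDF
      rw [hu2, Real.exp_add, Real.exp_add, hnexp, hdexp, hsplit, hs_eq, div_eq_mul_inv]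
      have h9 : ((n:ℝ)) * ((n:ℝ))⁻¹ = 1 := mul_inv_cancel₀ hne1
      have h10 : Real.sqrt (2 * Real.pi) * (Real.sqrt (2 * Real.pi))⁻¹ = 1 :=
        mul_inv_cancel₀ hne2
      linear_combination (Real.exp (-x) * Real.sqrt 2 * Real.sqrt (Real.log n) *
          Real.exp (-q n ^ 2 / 2) * (Real.sqrt (2 * Real.pi) * (Real.sqrt (2 * Real.pi))⁻¹)) * h9
        + (Real.exp (-x) * Real.sqrt 2 * Real.sqrt (Real.log n) *
          Real.exp (-q n ^ 2 / 2)) * h10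
    rw [← mul_div_assoc, hkey]
    ring
  -- key limit
  have hexpq : Tendsto (fun n : ℕ => Real.exp (-(q n) ^ 2 / 2)) atTop (nhds 1) := by
    have h0 : Tendsto (fun n : ℕ => -(q n) ^ 2 / 2) atTop (nhds 0) := by
      have := ((hq0.pow 2).neg).div_const 2
      simpa using this
    have := (Real.continuous_exp.tendsto 0).comp h0
    rw [Real.exp_zero] at this
    exact this
  have hus : Tendsto (fun n : ℕ => u n / s n) atTop (nhds 1) := by
    have h := hq0.div_atTop hstop
    have h' : Tendsto (fun n : ℕ => 1 + q n / s n) atTop (nhds 1) := by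
      simpa using tendsto_const_nhds.add h
    refine h'.congr' ?_
    filter_upwards [hueq, hstop.eventually_gt_atTop 0] with n h1 h2
    rw [h1]
    field_simp
  have hsu : Tendsto (fun n : ℕ => s n / u n) atTop (nhds 1) := by
    have := hus.inv₀ one_ne_zero
    rw [inv_one] at this
    exact this.congr fun n => by rw [inv_div]
  have key : Tendsto (fun n : ℕ => (n : ℝ) * (stdNormalPDF (u n) / u n)) atTop
      (nhds (Real.exp (-x))) := by
    have h := tendsto_const_nhds (x := Real.exp (-x)) (f := atTop (α := ℕ)) |>.mul
      (hsu.mul hexpq)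
    rw [mul_one, mul_one] at h
    exact h.congr' hpoint
  -- u → ∞
  have hUtop : Tendsto u atTop atTop := by
    apply tendsto_atTop_mono' atTop ?_ (tendsto_atTop_add_const_right atTop (-1) hstop)
    filter_upwards [hueq, hq0.eventually (eventually_gt_nhds (by norm_num : (-1:ℝ) < 0))]
      with n h1 h2
    rw [h1]; linarith
  -- squeeze
  have hgoal_eq : (fun n : ℕ => (n : ℝ) * (1 - stdNormalCDF (a n * x + b n)))
      = fun n : ℕ => (n : ℝ) * (1 - stdNormalCDF (u n)) := by
    funext n; rw [hu]
  rw [hgoal_eq]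
  have hlow : Tendsto (fun n : ℕ => ((n : ℝ) * (stdNormalPDF (u n) / u n))
      * (1 - ((u n)⁻¹) ^ 2)) atTop (nhds (Real.exp (-x))) := by
    have h1 : Tendsto (fun n : ℕ => 1 - ((u n)⁻¹) ^ 2) atTop (nhds 1) := by
      have := tendsto_const_nhds (x := (1:ℝ)) (f := atTop (α := ℕ)) |>.sub
        ((hUtop.inv_tendsto_atTop).pow 2)
      simpa using this
    have := key.mul h1
    simpa using this
  refine tendsto_of_tendsto_of_tendsto_of_le_of_le' hlow key ?_ ?_
  · filter_upwards [hUtop.eventually_gt_atTop 0] with n hn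
    rw [tail_eq]
    have h := le_tail (u n) hn
    have hn0 : (0:ℝ) ≤ (n : ℝ) := Nat.cast_nonneg n
    calc ((n : ℝ) * (stdNormalPDF (u n) / u n)) * (1 - ((u n)⁻¹) ^ 2)
        = (n : ℝ) * (stdNormalPDF (u n) / u n * (1 - ((u n)⁻¹) ^ 2)) := by ring
      _ ≤ (n : ℝ) * ∫ t in Set.Ioi (u n), stdNormalPDF t := mul_le_mul_of_nonneg_left h hn0
  · filter_upwards [hUtop.eventually_gt_atTop 0] with n hn
    rw [tail_eq]
    exact mul_le_mul_of_nonneg_left (tail_le (u n) hn) (Nat.cast_nonneg n)
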